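/- Set S = D(I_I − P^D_ℛ) and V = P^D_{𝒯^{⊥_D}} Z. Then EᵀSE and VᵀDV are invertible and Bᵀ P^D_ℋ D⁻¹ B = (EᵀSE)⁻¹ + BᵀV(VᵀDV)⁻¹VᵀB; i.e. the γγ-block of the asymptotic covariance matrix Σ_λ̂ has this representation. -/

import Mathlib

open Matrix BigOperators

noncomputable section

/-- Cells `(j,k)` of a `(J+1) × (K+1)` contingency table. -/
abbrev Cell (J K : ℕ) := Fin (J + 1) × Fin (K + 1)

/-- Standard unit vector `e_{jk}` in `ℝ^I`. -/
def eV {J K : ℕ} (c : Cell J K) : Cell J K → ℝ := Pi.single c 1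

/-- Row-sum vector `e_{j+} = Σ_k e_{jk}`. -/
def eRow {J K : ℕ} (j : Fin (J + 1)) : Cell J K → ℝ := ∑ k : Fin (K + 1), eV (j, k)

/-- Column-sum vector `e_{+k} = Σ_j e_{jk}`. -/
def eCol {J K : ℕ} (k : Fin (K + 1)) : Cell J K → ℝ := ∑ j : Fin (J + 1), eV (j, k)

/-- The all-ones vector `e_{++}`. -/
def eAll (J K : ℕ) : Cell J K → ℝ := ∑ j : Fin (J + 1), ∑ k : Fin (K + 1), eV (j, k)

/-- The row space `ℛ = span{e_{0+},…,e_{J+}}`. -/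
def rowSpace (J K : ℕ) : Submodule ℝ (Cell J K → ℝ) :=
  Submodule.span ℝ (Set.range (eRow (J := J) (K := K)))

/-- The column space `𝒞 = span{e_{+0},…,e_{+K}}`. -/
def colSpace (J K : ℕ) : Submodule ℝ (Cell J K → ℝ) :=
  Submodule.span ℝ (Set.range (eCol (J := J) (K := K)))

/-- The diagonal space `𝒟 = span{e_{++}}`. -/
def diagSpace (J K : ℕ) : Submodule ℝ (Cell J K → ℝ) :=
  Submodule.span ℝ {eAll J K}

/-- The marginal space `𝒯 = ℛ + 𝒞`. -/
def margSpace (J K : ℕ) : Submodule ℝ (Cell J K → ℝ) := rowSpace J K ⊔ colSpace J K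

/-- `P` is the `D`-orthogonal projection matrix onto the subspace `S`:
`P x ∈ S` and `x - P x` is `D`-orthogonal to `S`, for every `x`. -/
def IsProjD {J K : ℕ} (D : Matrix (Cell J K) (Cell J K) ℝ) (S : Submodule ℝ (Cell J K → ℝ))
    (P : Matrix (Cell J K) (Cell J K) ℝ) : Prop :=
  ∀ x, P.mulVec x ∈ S ∧ ∀ s ∈ S, (x - P.mulVec x) ⬝ᵥ D.mulVec s = 0

/-- The `D`-orthogonal complement of a subspace `S`. -/
def perpD {J K : ℕ} (D : Matrix (Cell J K) (Cell J K) ℝ) (S : Submodule ℝ (Cell J K → ℝ)) :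
    Submodule ℝ (Cell J K → ℝ) where
  carrier := {x | ∀ t ∈ S, x ⬝ᵥ D.mulVec t = 0}
  add_mem' := by
    intro a b ha hb t ht
    simp only [Set.mem_setOf_eq] at *
    simp [add_dotProduct, ha t ht, hb t ht]
  zero_mem' := by
    intro t ht
    simp
  smul_mem' := by
    intro c a ha t ht
    simp only [Set.mem_setOf_eq] at *
    simp [smul_dotProduct, ha t ht]

/-- The vector `c_{jk} = e_{jk} + e_{00} - e_{j0} - e_{0k}` (for `1 ≤ j`, `1 ≤ k`). -/
def cVec {J K : ℕ} (j : Fin J) (k : Fin K) : Cell J K → ℝ :=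
  eV (j.succ, k.succ) + eV (0, 0) - eV (j.succ, 0) - eV (0, k.succ)

/-- The `I × (JK)` matrix `C` with columns `c_{jk}`. -/
def Cmat (J K : ℕ) : Matrix (Cell J K) (Fin J × Fin K) ℝ :=
  fun i jk => cVec jk.1 jk.2 i

/-- The vector `b_k = e_{0k} - e_{00}` (for `1 ≤ k`). -/
def bVec {J K : ℕ} (k : Fin K) : Cell J K → ℝ :=
  eV ((0 : Fin (J + 1)), k.succ) - eV (0, 0)

/-- The `I × K` matrix `B` with columns `b_k`. -/
def Bmat (J K : ℕ) : Matrix (Cell J K) (Fin K) ℝ :=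
  fun i k => bVec k i

/-- The `I × K` matrix `E` with columns `e_{+1},…,e_{+K}`. -/
def Emat (J K : ℕ) : Matrix (Cell J K) (Fin K) ℝ :=
  fun i k => eCol k.succ i

/-- Column space of a matrix. -/
def colSpan {m n : Type*} [Fintype n] (A : Matrix m n ℝ) : Submodule ℝ (m → ℝ) :=
  Submodule.span ℝ (Set.range fun j => fun i => A i j)

/-- The reduced `(JK) × L` covariate matrix `Z°` with rows `z_{jk}ᵀ`, `j,k ≥ 1`. -/
def Zred {J K : ℕ} {L : Type*} (Z : Matrix (Cell J K) L ℝ) : Matrix (Fin J × Fin K) L ℝ :=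
  fun jk => Z (jk.1.succ, jk.2.succ)

/-- The model space `ℋ = 𝒯 + col(Z)` of the log-linear model
`η_{jk} = α + ρ_j + γ_k + z_{jk}ᵀ θ`. -/
def modelSpace {J K : ℕ} {L : Type*} [Fintype L] (Z : Matrix (Cell J K) L ℝ) :
    Submodule ℝ (Cell J K → ℝ) :=
  margSpace J K ⊔ colSpan Z

end
noncomputable section Helpers
open Matrix
variable {J K : ℕ} {μ : Cell J K → ℝ}

lemma dotD_comm (μ : Cell J K → ℝ) (a b : Cell J K → ℝ) :
    a ⬝ᵥ (Matrix.diagonal μ).mulVec b = b ⬝ᵥ (Matrix.diagonal μ).mulVec a := by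
  simp only [dotProduct, Matrix.mulVec_diagonal]
  exact Finset.sum_congr rfl fun i _ => by ring

lemma dotD_self_zero (hμ : ∀ i, 0 < μ i) {a : Cell J K → ℝ}
    (h : a ⬝ᵥ (Matrix.diagonal μ).mulVec a = 0) : a = 0 := by
  have h' : ∀ i ∈ Finset.univ, (0:ℝ) ≤ a i * (μ i * a i) := by
    intro i _
    have := (hμ i).le
    nlinarith [sq_nonneg (a i)]
  simp only [dotProduct, Matrix.mulVec_diagonal] at h
  have := (Finset.sum_eq_zero_iff_of_nonneg h').mp h
  funext i
  have hi := this i (Finset.mem_univ i)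
  show a i = 0
  have h2 : μ i * (a i * a i) = 0 := by
    have : a i * (μ i * a i) = μ i * (a i * a i) := by ring
    linarith [hi]
  rcases mul_eq_zero.mp h2 with h3 | h3
  · exact absurd h3 (hμ i).ne'
  · exact mul_self_eq_zero.mp h3

lemma transpose_mul_mulVec {n : Type*} [Fintype n] (X : Matrix (Cell J K) n ℝ)
    (A : Matrix (Cell J K) (Cell J K) ℝ) (x : Cell J K → ℝ) (j : n) :
    ((Xᵀ * A).mulVec x) j = (fun i => X i j) ⬝ᵥ A.mulVec x := by
  simp only [Matrix.mulVec, dotProduct, Matrix.mul_apply, Matrix.transpose_apply,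
    Finset.sum_mul, Finset.mul_sum]
  rw [Finset.sum_comm]
  exact Finset.sum_congr rfl fun a _ => Finset.sum_congr rfl fun i _ => by ring

lemma mul3_apply {n p : Type*} [Fintype n] [Fintype p] (X : Matrix (Cell J K) n ℝ)
    (A : Matrix (Cell J K) (Cell J K) ℝ) (Y : Matrix (Cell J K) p ℝ) (j : n) (k : p) :
    (Xᵀ * A * Y) j k = (fun i => X i j) ⬝ᵥ A.mulVec (fun i => Y i k) := by
  have h1 : (Xᵀ * A * Y) j k = ((Xᵀ * A).mulVec (fun i => Y i k)) j := by
    simp [Matrix.mul_apply, Matrix.mulVec, dotProduct]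
  rw [h1, transpose_mul_mulVec]

lemma txd_apply {n : Type*} [Fintype n] (X : Matrix (Cell J K) n ℝ) (j : n) (i : Cell J K) :
    (Xᵀ * Matrix.diagonal μ) j i
      = (fun a => X a j) ⬝ᵥ (Matrix.diagonal μ).mulVec (Pi.single i 1) := by
  classical
  simp [Matrix.mul_apply, dotProduct, Matrix.mulVec_diagonal, Pi.single_apply,
    Matrix.diagonal_apply, mul_ite, ite_mul, Finset.sum_ite_eq', mul_comm]

/-- if `v ∈ S` then `vᵀ D (P x) = vᵀ D x`. -/
lemma proj_fix_apply {S : Submodule ℝ (Cell J K → ℝ)} {P : Matrix (Cell J K) (Cell J K) ℝ}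
    (hP : IsProjD (Matrix.diagonal μ) S P) {v : Cell J K → ℝ} (hv : v ∈ S) (x : Cell J K → ℝ) :
    v ⬝ᵥ (Matrix.diagonal μ).mulVec (P.mulVec x) = v ⬝ᵥ (Matrix.diagonal μ).mulVec x := by
  have h : v ⬝ᵥ (Matrix.diagonal μ).mulVec (x - P.mulVec x) = 0 := by
    rw [dotD_comm]; exact (hP x).2 v hv
  rw [Matrix.mulVec_sub, dotProduct_sub] at h
  linarith

/-- matrix version: if all columns of `X` lie in `S` then `Xᵀ D P = Xᵀ D`. -/
lemma proj_fix_mat {S : Submodule ℝ (Cell J K → ℝ)} {P : Matrix (Cell J K) (Cell J K) ℝ}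
    (hP : IsProjD (Matrix.diagonal μ) S P) {n : Type*} [Fintype n]
    (X : Matrix (Cell J K) n ℝ) (hX : ∀ j, (fun i => X i j) ∈ S) :
    Xᵀ * Matrix.diagonal μ * P = Xᵀ * Matrix.diagonal μ := by
  classical
  ext j i
  rw [mul3_apply, txd_apply]
  have hc : (fun a => P a i) = P.mulVec (Pi.single i 1) := by
    funext a; simp [Matrix.mulVec_single]
  rw [hc, proj_fix_apply hP (hX j)]

/-- if columns of `X` lie in `S` and columns of `Y` lie in `perpD D S` then `Xᵀ D Y = 0`. -/
lemma perp_annih {S : Submodule ℝ (Cell J K → ℝ)} {n p : Type*} [Fintype n] [Fintype p]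
    (X : Matrix (Cell J K) n ℝ) (Y : Matrix (Cell J K) p ℝ)
    (hX : ∀ j, (fun i => X i j) ∈ S) (hY : ∀ k, (fun i => Y i k) ∈ perpD (Matrix.diagonal μ) S) :
    Xᵀ * Matrix.diagonal μ * Y = 0 := by
  ext j k
  rw [mul3_apply, dotD_comm]
  exact hY k _ (hX j)

lemma col_mem_colSpan {n : Type*} [Fintype n] (A : Matrix (Cell J K) n ℝ) (j : n) :
    (fun i => A i j) ∈ colSpan A :=
  Submodule.subset_span ⟨j, rfl⟩

lemma mulVec_mem_colSpan {n : Type*} [Fintype n] (A : Matrix (Cell J K) n ℝ) (c : n → ℝ) :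
    A.mulVec c ∈ colSpan A := by
  rw [colSpan, Submodule.mem_span_range_iff_exists_fun]
  refine ⟨c, ?_⟩
  funext i
  simp [Matrix.mulVec, dotProduct, Finset.sum_apply, mul_comm]

lemma colSpan_le {n : Type*} [Fintype n] {A : Matrix (Cell J K) n ℝ}
    {S : Submodule ℝ (Cell J K → ℝ)} (h : ∀ j, (fun i => A i j) ∈ S) : colSpan A ≤ S := by
  rw [colSpan, Submodule.span_le]
  rintro _ ⟨j, rfl⟩; exact h j

/-- Gram matrix invertibility. -/
lemma gram_isUnit (hμ : ∀ i, 0 < μ i) {n : Type*} [Fintype n] [DecidableEq n]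
    (W : Matrix (Cell J K) n ℝ) (hW : ∀ c, W.mulVec c = 0 → c = 0) :
    IsUnit (Wᵀ * Matrix.diagonal μ * W) := by
  rw [Matrix.isUnit_iff_isUnit_det, isUnit_iff_ne_zero]
  intro hdet
  obtain ⟨v, hv0, hv⟩ := Matrix.exists_mulVec_eq_zero_iff.mpr hdet
  apply hv0
  apply hW
  apply dotD_self_zero hμ
  have h1 : (Wᵀ * Matrix.diagonal μ * W).mulVec v
      = Wᵀ.mulVec ((Matrix.diagonal μ).mulVec (W.mulVec v)) := by
    rw [Matrix.mulVec_mulVec, Matrix.mulVec_mulVec, Matrix.mul_assoc]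
  have h2 : v ⬝ᵥ (Wᵀ * Matrix.diagonal μ * W).mulVec v = 0 := by rw [hv]; simp
  rw [h1, Matrix.dotProduct_mulVec, Matrix.vecMul_transpose] at h2
  exact h2

/-- uniqueness of the `D`-orthogonal projection. -/
lemma projD_unique (hμ : ∀ i, 0 < μ i) {S : Submodule ℝ (Cell J K → ℝ)}
    {P Q : Matrix (Cell J K) (Cell J K) ℝ}
    (hP : IsProjD (Matrix.diagonal μ) S P) (hQ : IsProjD (Matrix.diagonal μ) S Q) : P = Q := by
  classical
  have key : ∀ x, P.mulVec x = Q.mulVec x := by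
    intro x
    set u := P.mulVec x - Q.mulVec x with hu
    have huS : u ∈ S := Submodule.sub_mem S (hP x).1 (hQ x).1
    have h1 : (x - P.mulVec x) ⬝ᵥ (Matrix.diagonal μ).mulVec u = 0 := (hP x).2 u huS
    have h2 : (x - Q.mulVec x) ⬝ᵥ (Matrix.diagonal μ).mulVec u = 0 := (hQ x).2 u huS
    have h3 : u ⬝ᵥ (Matrix.diagonal μ).mulVec u = 0 := by
      have e : u ⬝ᵥ (Matrix.diagonal μ).mulVec u
          = (x - Q.mulVec x) ⬝ᵥ (Matrix.diagonal μ).mulVec u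
            - (x - P.mulVec x) ⬝ᵥ (Matrix.diagonal μ).mulVec u := by
        rw [← sub_dotProduct]
        congr 1
        rw [hu]; abel
      rw [e, h1, h2]; ring
    have := dotD_self_zero hμ h3
    have := sub_eq_zero.mp this
    exact this
  ext i j
  have h1 := congrFun (key (Pi.single j 1)) i
  rw [Matrix.mulVec_single, Matrix.mulVec_single] at h1
  simpa using h1

/-- vectors annihilated (in `D`-pairing) by a fixed vector form a submodule. -/
def annih (μ : Cell J K → ℝ) (v : Cell J K → ℝ) : Submodule ℝ (Cell J K → ℝ) where
  carrier := {s | v ⬝ᵥ (Matrix.diagonal μ).mulVec s = 0}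
  add_mem' := by
    intro a b ha hb
    simp only [Set.mem_setOf_eq] at *
    simp [Matrix.mulVec_add, dotProduct_add, ha, hb]
  zero_mem' := by simp
  smul_mem' := by
    intro c a ha
    simp only [Set.mem_setOf_eq] at *
    simp [Matrix.mulVec_smul, dotProduct_smul, ha]

lemma mem_annih_of_matrix {n : Type*} [Fintype n] {X : Matrix (Cell J K) n ℝ}
    {A : Matrix (Cell J K) (Cell J K) ℝ} (h : Xᵀ * Matrix.diagonal μ * A = 0)
    (x : Cell J K → ℝ) (j : n) : (fun i => X i j) ∈ annih μ (A.mulVec x) := by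
  show (A.mulVec x) ⬝ᵥ (Matrix.diagonal μ).mulVec (fun i => X i j) = 0
  rw [dotD_comm]
  have e : (fun i => X i j) ⬝ᵥ (Matrix.diagonal μ).mulVec (A.mulVec x)
      = ((Xᵀ * (Matrix.diagonal μ * A)).mulVec x) j := by
    rw [Matrix.mulVec_mulVec, transpose_mul_mulVec]
  rw [e, ← Matrix.mul_assoc, h]
  simp
lemma eV_apply (c i : Cell J K) : eV c i = if i = c then 1 else 0 := by
  simp [eV, Pi.single_apply]

lemma eRow_apply (j' j : Fin (J+1)) (k : Fin (K+1)) :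
    eRow (K := K) j' (j, k) = if j = j' then 1 else 0 := by
  classical
  simp only [eRow, Finset.sum_apply, eV_apply, Prod.mk.injEq]
  by_cases h : j = j' <;> simp [h]

lemma eCol_apply (k' k : Fin (K+1)) (j : Fin (J+1)) :
    eCol (J := J) k' (j, k) = if k = k' then 1 else 0 := by
  classical
  simp only [eCol, Finset.sum_apply, eV_apply, Prod.mk.injEq]
  by_cases h : k = k' <;> simp [h]

lemma row_char {r : Cell J K → ℝ} (hr : r ∈ rowSpace J K) :
    ∃ c : Fin (J+1) → ℝ, ∀ j k, r (j, k) = c j := by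
  rw [rowSpace, Submodule.mem_span_range_iff_exists_fun] at hr
  obtain ⟨c, rfl⟩ := hr
  refine ⟨c, fun j k => ?_⟩
  simp [Finset.sum_apply, eRow_apply, mul_ite, Finset.sum_ite_eq']

lemma col_char {r : Cell J K → ℝ} (hr : r ∈ colSpace J K) :
    ∃ d : Fin (K+1) → ℝ, ∀ j k, r (j, k) = d k := by
  rw [colSpace, Submodule.mem_span_range_iff_exists_fun] at hr
  obtain ⟨d, rfl⟩ := hr
  refine ⟨d, fun j k => ?_⟩
  simp [Finset.sum_apply, eCol_apply, mul_ite, Finset.sum_ite_eq']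

lemma eRow_mem (j : Fin (J+1)) : eRow (K := K) j ∈ rowSpace J K :=
  Submodule.subset_span ⟨j, rfl⟩

lemma eCol_mem (k : Fin (K+1)) : eCol (J := J) k ∈ colSpace J K :=
  Submodule.subset_span ⟨k, rfl⟩

lemma eCol_zero_eq : eCol (J := J) (0 : Fin (K+1)) =
    (∑ j : Fin (J+1), eRow (K := K) j) - ∑ k' : Fin K, eCol (J := J) k'.succ := by
  classical
  funext i
  obtain ⟨j, k⟩ := i
  simp only [Finset.sum_apply, Pi.sub_apply, eRow_apply, eCol_apply]
  rcases Fin.eq_zero_or_eq_succ k with h | ⟨k₀, rfl⟩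
  · subst h
    simp [Fin.succ_ne_zero, fun k' : Fin K => (Fin.succ_ne_zero k').symm]
  · simp [Fin.succ_ne_zero, Fin.succ_inj]

lemma colSpace_le_sup : colSpace J K ≤ rowSpace J K ⊔ colSpan (Emat J K) := by
  rw [colSpace, Submodule.span_le]
  rintro _ ⟨k, rfl⟩
  rcases Fin.eq_zero_or_eq_succ k with h | ⟨k₀, rfl⟩
  · subst h
    rw [eCol_zero_eq]
    apply Submodule.sub_mem
    · exact Submodule.mem_sup_left (Submodule.sum_mem _ fun j _ => eRow_mem j)
    · exact Submodule.mem_sup_right (Submodule.sum_mem _ fun k' _ =>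
        col_mem_colSpan (Emat J K) k')
  · exact Submodule.mem_sup_right (col_mem_colSpan (Emat J K) k₀)

lemma colSpan_Emat_le : colSpan (Emat J K) ≤ colSpace J K :=
  colSpan_le fun k => eCol_mem k.succ

lemma margSpace_eq : margSpace J K = rowSpace J K ⊔ colSpan (Emat J K) := by
  rw [margSpace]
  apply le_antisymm
  · exact sup_le le_sup_left colSpace_le_sup
  · exact sup_le le_sup_left (le_trans colSpan_Emat_le le_sup_right)

lemma bVec_dot (k : Fin K) (r : Cell J K → ℝ) :
    bVec (J := J) k ⬝ᵥ r = r (0, k.succ) - r (0, 0) := by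
  classical
  simp only [bVec, dotProduct, Pi.sub_apply, eV_apply, sub_mul, ite_mul, one_mul,
    zero_mul, Finset.sum_sub_distrib, Finset.sum_ite_eq', Finset.mem_univ, if_true]

lemma rank_inj {L : ℕ} {A : Matrix (Fin J × Fin K) (Fin L) ℝ} (h : A.rank = L)
    (c : Fin L → ℝ) (hc : A.mulVec c = 0) : c = 0 := by
  have hrn := LinearMap.finrank_range_add_finrank_ker A.mulVecLin
  rw [show Module.finrank ℝ (Fin L → ℝ) = L by simp, show Module.finrank ℝ
    (LinearMap.range A.mulVecLin) = L from h] at hrn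
  have hker : Module.finrank ℝ (LinearMap.ker A.mulVecLin) = 0 := by omega
  have : LinearMap.ker A.mulVecLin = ⊥ := Submodule.finrank_eq_zero.mp hker
  have hmem : c ∈ LinearMap.ker A.mulVecLin := by
    rw [LinearMap.mem_ker, Matrix.mulVecLin_apply, hc]
  rw [this] at hmem
  simpa using hmem
/-- flipped version: columns of `X` in `perpD D S`, columns of `Y` in `S`. -/
lemma perp_annih' {S : Submodule ℝ (Cell J K → ℝ)} {n p : Type*} [Fintype n] [Fintype p]
    (X : Matrix (Cell J K) n ℝ) (Y : Matrix (Cell J K) p ℝ)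
    (hX : ∀ j, (fun i => X i j) ∈ perpD (Matrix.diagonal μ) S)
    (hY : ∀ k, (fun i => Y i k) ∈ S) :
    Xᵀ * Matrix.diagonal μ * Y = 0 := by
  ext j k
  rw [mul3_apply]
  exact hX j _ (hY k)

/-- `D P = Pᵀ D` for a `D`-orthogonal projection `P` (whose columns lie in `S`). -/
lemma projD_DP {S : Submodule ℝ (Cell J K → ℝ)} {P : Matrix (Cell J K) (Cell J K) ℝ}
    (hP : IsProjD (Matrix.diagonal μ) S P) (hcol : ∀ j, (fun i => P i j) ∈ S) :
    Matrix.diagonal μ * P = Pᵀ * Matrix.diagonal μ := by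
  have h1 : Pᵀ * Matrix.diagonal μ = Pᵀ * Matrix.diagonal μ * P :=
    (proj_fix_mat hP P hcol).symm
  have h2 := congrArg Matrix.transpose h1
  simp only [Matrix.transpose_mul, Matrix.transpose_transpose, Matrix.diagonal_transpose] at h2
  -- h2 : diagonal μ * P = Pᵀ * (diagonal μ * P)
  calc Matrix.diagonal μ * P = Pᵀ * (Matrix.diagonal μ * P) := h2
    _ = Pᵀ * Matrix.diagonal μ * P := by rw [Matrix.mul_assoc]
    _ = Pᵀ * Matrix.diagonal μ := h1.symm

lemma cols_mem {S : Submodule ℝ (Cell J K → ℝ)} {P : Matrix (Cell J K) (Cell J K) ℝ}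
    (hP : IsProjD (Matrix.diagonal μ) S P) (j : Cell J K) : (fun i => P i j) ∈ S := by
  have h := (hP (Pi.single j 1)).1
  have e : P.mulVec (Pi.single j 1) = fun i => P i j := by
    funext a; simp [Matrix.mulVec_single]
  rwa [e] at h

lemma one_sub_mulVec (P : Matrix (Cell J K) (Cell J K) ℝ) (x : Cell J K → ℝ) :
    (1 - P).mulVec x = x - P.mulVec x := by
  rw [Matrix.sub_mulVec, Matrix.one_mulVec]

end Helpers

/-- with `S = D(I − P^D_ℛ)` and `V = P^D_{𝒯^{⊥_D}} Z`, the matrices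
`EᵀSE` and `VᵀDV` are invertible and the `γγ`-block of the asymptotic covariance
matrix `Σ_λ̂` satisfies `Bᵀ P^D_ℋ D⁻¹ B = (EᵀSE)⁻¹ + BᵀV(VᵀDV)⁻¹VᵀB`. -/
theorem gamma_gamma_block_representation
    {J K L : ℕ} (hJ : 1 ≤ J) (hK : 1 ≤ K) (hL : 1 ≤ L)
    (μ : Cell J K → ℝ) (hμ : ∀ i, 0 < μ i)
    (Z : Matrix (Cell J K) (Fin L) ℝ)
    (hZrow : ∀ j, Z (j, 0) = 0) (hZcol : ∀ k, Z (0, k) = 0)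
    (hZrank : (Zred Z).rank = L)
    (PH : Matrix (Cell J K) (Cell J K) ℝ)
    (hPH : IsProjD (Matrix.diagonal μ) (modelSpace Z) PH)
    (PR : Matrix (Cell J K) (Cell J K) ℝ)
    (hPR : IsProjD (Matrix.diagonal μ) (rowSpace J K) PR)
    (PTperp : Matrix (Cell J K) (Cell J K) ℝ)
    (hPTperp : IsProjD (Matrix.diagonal μ) (perpD (Matrix.diagonal μ) (margSpace J K)) PTperp)
    (S : Matrix (Cell J K) (Cell J K) ℝ)
    (hS : S = Matrix.diagonal μ * (1 - PR))
    (V : Matrix (Cell J K) (Fin L) ℝ) (hV : V = PTperp * Z) :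
    IsUnit ((Emat J K)ᵀ * S * Emat J K) ∧
    IsUnit (Vᵀ * Matrix.diagonal μ * V) ∧
    (Bmat J K)ᵀ * PH * (Matrix.diagonal μ)⁻¹ * Bmat J K =
      ((Emat J K)ᵀ * S * Emat J K)⁻¹ +
        (Bmat J K)ᵀ * V * (Vᵀ * Matrix.diagonal μ * V)⁻¹ * Vᵀ * Bmat J K := by
  classical
  set D := Matrix.diagonal μ with hD
  set E := Emat J K with hE
  set B := Bmat J K with hB
  set W : Matrix (Cell J K) (Fin K) ℝ := (1 - PR) * E with hW
  set M : Matrix (Fin K) (Fin K) ℝ := Wᵀ * D * W with hM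
  set N : Matrix (Fin L) (Fin L) ℝ := Vᵀ * D * V with hN
  set Rm : Matrix (Cell J K) (Fin (J+1)) ℝ := fun i j => eRow j i with hRm
  set Tm : Matrix (Cell J K) (Fin L) ℝ := Z - V with hTm
  -- column membership facts
  have hRcols : ∀ j, (fun i => Rm i j) ∈ rowSpace J K := fun j => eRow_mem j
  have hRcolsT : ∀ j, (fun i => Rm i j) ∈ margSpace J K :=
    fun j => Submodule.mem_sup_left (hRcols j)
  have hEcolsT : ∀ k, (fun i => E i k) ∈ margSpace J K :=
    fun k => Submodule.mem_sup_right (eCol_mem k.succ)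
  have hPRcols : ∀ j, (fun i => PR i j) ∈ rowSpace J K := fun j => cols_mem hPR j
  -- basic PR identities
  have hRfix : Rmᵀ * D * PR = Rmᵀ * D := proj_fix_mat hPR Rm hRcols
  have hRperp : Rmᵀ * D * (1 - PR) = 0 := by
    rw [Matrix.mul_sub, Matrix.mul_one, hRfix, sub_self]
  have hPRDP : D * PR = PRᵀ * D := projD_DP hPR hPRcols
  have hsym' : (1 - PR)ᵀ * D = D * (1 - PR) := by
    have e : D * (1 - PR) = D - D * PR := by rw [Matrix.mul_sub, Matrix.mul_one]
    rw [e, Matrix.transpose_sub, Matrix.transpose_one, Matrix.sub_mul, Matrix.one_mul, hPRDP]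
  have hPRperp : PRᵀ * D * (1 - PR) = 0 := by
    rw [Matrix.mul_sub, Matrix.mul_one, proj_fix_mat hPR PR hPRcols, sub_self]
  have hkey : (1 - PR)ᵀ * (D * (1 - PR)) = D * (1 - PR) := by
    rw [Matrix.transpose_sub, Matrix.transpose_one, Matrix.sub_mul, Matrix.one_mul]
    rw [← Matrix.mul_assoc, hPRperp, sub_zero]
  -- W columns lie in 𝒯
  have hWcols : ∀ k, (fun i => W i k) ∈ margSpace J K := by
    intro k
    have e0 : W = E - PR * E := by rw [hW, Matrix.sub_mul, Matrix.one_mul]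
    have e1 : (fun i => W i k) = (fun i => E i k) - PR.mulVec (fun i => E i k) := by
      funext i
      rw [e0]
      simp [Matrix.sub_apply, Pi.sub_apply, Matrix.mul_apply, Matrix.mulVec, dotProduct]
    rw [e1]
    exact Submodule.sub_mem _ (hEcolsT k) (Submodule.mem_sup_left ((hPR _).1))
  -- M = Eᵀ S E and invertibility
  have hEDW : Eᵀ * D * W = M := by
    rw [hM, hW, Matrix.transpose_mul]
    calc Eᵀ * D * ((1 - PR) * E) = Eᵀ * (D * (1 - PR)) * E := by
          simp only [Matrix.mul_assoc]
      _ = Eᵀ * ((1 - PR)ᵀ * (D * (1 - PR))) * E := by rw [hkey]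
      _ = Eᵀ * (1 - PR)ᵀ * D * ((1 - PR) * E) := by simp only [Matrix.mul_assoc]
  have hesm : Eᵀ * S * E = M := by
    rw [hS]
    calc Eᵀ * (D * (1 - PR)) * E = Eᵀ * D * ((1 - PR) * E) := by
          simp only [Matrix.mul_assoc]
      _ = M := hEDW
  have hWinj : ∀ c, W.mulVec c = 0 → c = 0 := by
    intro c hc
    have h1 : W.mulVec c = E.mulVec c - PR.mulVec (E.mulVec c) := by
      rw [hW, ← Matrix.mulVec_mulVec, one_sub_mulVec]
    have h2 : E.mulVec c ∈ rowSpace J K := by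
      have e2 : E.mulVec c = PR.mulVec (E.mulVec c) := by
        rw [h1] at hc
        have := sub_eq_zero.mp hc
        exact this
      rw [e2]; exact (hPR _).1
    obtain ⟨cc, hcc⟩ := row_char h2
    have hEv : ∀ (j : Fin (J+1)) (k : Fin (K+1)),
        E.mulVec c (j, k) = ∑ k' : Fin K, (if k = k'.succ then (1:ℝ) else 0) * c k' := by
      intro j k
      simp [Matrix.mulVec, dotProduct, hE, Emat, eCol_apply]
    funext k₀
    have hv1 : E.mulVec c (0, k₀.succ) = c k₀ := by
      rw [hEv]
      simp [Fin.succ_inj, ite_mul, one_mul, zero_mul, Finset.sum_ite_eq]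
    have hv0 : E.mulVec c (0, 0) = 0 := by
      rw [hEv]
      refine Finset.sum_eq_zero fun k' _ => ?_
      simp [(Fin.succ_ne_zero k').symm]
    have : c k₀ = (0:ℝ) := by rw [← hv1, hcc 0 k₀.succ, ← hcc 0 0, hv0]
    simpa using this
  have hMunit : IsUnit M := gram_isUnit hμ W hWinj
  have hMM : M * M⁻¹ = 1 :=
    Matrix.mul_nonsing_inv M ((Matrix.isUnit_iff_isUnit_det M).mp hMunit)
  -- the projection onto 𝒯
  set PT : Matrix (Cell J K) (Cell J K) ℝ := PR + W * (M⁻¹ * (Wᵀ * D)) with hPT_def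
  have shuffle : ∀ {n p : Type} [Fintype n] [Fintype p] (X : Matrix (Cell J K) n ℝ)
      (A : Matrix (Cell J K) p ℝ) (G : Matrix p p ℝ),
      Xᵀ * D * (A * (G * (Aᵀ * D))) = ((Xᵀ * D * A) * G) * (Aᵀ * D) := by
    intro n p _ _ X A G
    simp only [Matrix.mul_assoc]
  have hWD : Wᵀ * D = Eᵀ * D - Eᵀ * D * PR := by
    rw [hW, Matrix.transpose_mul, Matrix.mul_assoc, hsym']
    rw [← Matrix.mul_assoc, Matrix.mul_sub, Matrix.mul_one]
  have hRW : Rmᵀ * D * W = 0 := by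
    rw [hW, ← Matrix.mul_assoc, hRperp, Matrix.zero_mul]
  have hRPT : Rmᵀ * D * PT = Rmᵀ * D := by
    rw [hPT_def, Matrix.mul_add, shuffle, hRW, Matrix.zero_mul, Matrix.zero_mul, hRfix, add_zero]
  have hEPT : Eᵀ * D * PT = Eᵀ * D := by
    rw [hPT_def, Matrix.mul_add, shuffle, hEDW, hMM, Matrix.one_mul, hWD]
    abel
  -- PT is the D-orthogonal projection onto 𝒯
  have hPTproj : IsProjD D (margSpace J K) PT := by
    intro x
    constructor
    · rw [hPT_def, Matrix.add_mulVec]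
      apply Submodule.add_mem
      · exact Submodule.mem_sup_left ((hPR x).1)
      · rw [← Matrix.mulVec_mulVec]
        exact colSpan_le hWcols (mulVec_mem_colSpan W _)
    · intro s hs
      have hconv : ∀ {n : Type} [Fintype n] (X : Matrix (Cell J K) n ℝ),
          Xᵀ * D * PT = Xᵀ * D → ∀ j, (fun i => X i j) ∈ annih μ (x - PT.mulVec x) := by
        intro n _ X hX j
        have h0 : Xᵀ * D * (1 - PT) = 0 := by
          rw [Matrix.mul_sub, Matrix.mul_one, hX, sub_self]
        have h1 := mem_annih_of_matrix h0 x j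
        rwa [one_sub_mulVec] at h1
      have hle : margSpace J K ≤ annih μ (x - PT.mulVec x) := by
        rw [margSpace_eq]
        apply sup_le
        · rw [rowSpace, Submodule.span_le]
          rintro _ ⟨j, rfl⟩
          exact hconv Rm hRPT j
        · exact colSpan_le (hconv E hEPT)
      exact hle hs
  -- double orthocomplement
  have hdblperp : ∀ x : Cell J K → ℝ,
      (∀ u ∈ perpD D (margSpace J K), x ⬝ᵥ D.mulVec u = 0) → x ∈ margSpace J K := by
    intro x hx
    have hd : (x - PT.mulVec x) ∈ perpD D (margSpace J K) := fun t ht => (hPTproj x).2 t ht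
    have h1 : x ⬝ᵥ D.mulVec (x - PT.mulVec x) = 0 := hx _ hd
    have h2 : (PT.mulVec x) ⬝ᵥ D.mulVec (x - PT.mulVec x) = 0 := by
      rw [hD, dotD_comm]
      exact hd _ (hPTproj x).1
    have h3 : (x - PT.mulVec x) ⬝ᵥ D.mulVec (x - PT.mulVec x) = 0 := by
      rw [sub_dotProduct, h1, h2, sub_zero]
    have h4 : x - PT.mulVec x = 0 := dotD_self_zero hμ h3
    have h5 : x = PT.mulVec x := sub_eq_zero.mp h4
    rw [h5]
    exact (hPTproj x).1
  -- V columns in 𝒯^⊥, Tm columns in 𝒯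
  have hVcolsPerp : ∀ k, (fun i => V i k) ∈ perpD D (margSpace J K) := by
    intro k
    have e1 : (fun i => V i k) = PTperp.mulVec (fun i => Z i k) := by
      funext i
      rw [hV]
      simp [Matrix.mul_apply, Matrix.mulVec, dotProduct]
    rw [e1]
    exact (hPTperp _).1
  have hTmcols : ∀ k, (fun i => Tm i k) ∈ margSpace J K := by
    intro k
    have e1 : (fun i => Tm i k) = (fun i => Z i k) - PTperp.mulVec (fun i => Z i k) := by
      funext i
      rw [hTm]
      simp [Matrix.sub_apply, Pi.sub_apply, hV, Matrix.mul_apply, Matrix.mulVec,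
        dotProduct]
    rw [e1]
    exact hdblperp _ fun u hu => (hPTperp (fun i => Z i k)).2 u hu
  have hZcols : ∀ k, (fun i => Z i k) ∈ modelSpace Z :=
    fun k => Submodule.mem_sup_right (col_mem_colSpan Z k)
  -- N invertible
  have hVinj : ∀ c, V.mulVec c = 0 → c = 0 := by
    intro c hc
    have hZc : Z.mulVec c ∈ margSpace J K := by
      have e1 : Z.mulVec c = Tm.mulVec c := by
        rw [hTm, Matrix.sub_mulVec, hc, sub_zero]
      rw [e1]
      exact colSpan_le hTmcols (mulVec_mem_colSpan Tm c)
    obtain ⟨r, hr, cv, hcv, hsum⟩ := Submodule.mem_sup.mp hZc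
    obtain ⟨cc, hcc⟩ := row_char hr
    obtain ⟨dd, hdd⟩ := col_char hcv
    have hval : ∀ (j : Fin (J+1)) (k : Fin (K+1)), Z.mulVec c (j, k) = cc j + dd k := by
      intro j k
      rw [← hsum]
      simp [Pi.add_apply, hcc j k, hdd j k]
    have hz0 : ∀ j : Fin (J+1), Z.mulVec c (j, 0) = 0 := by
      intro j
      show Z (j, 0) ⬝ᵥ c = 0
      rw [hZrow, zero_dotProduct]
    have hz0' : ∀ k : Fin (K+1), Z.mulVec c (0, k) = 0 := by
      intro k
      show Z (0, k) ⬝ᵥ c = 0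
      rw [hZcol, zero_dotProduct]
    have hzz : ∀ (j : Fin (J+1)) (k : Fin (K+1)), Z.mulVec c (j, k) = 0 := by
      intro j k
      have e1 := hval j k
      have e2 := hval j 0
      have e3 := hval 0 k
      have e4 := hval 0 0
      rw [hz0 j] at e2
      rw [hz0' k] at e3
      rw [hz0 0] at e4
      rw [e1]
      linarith
    have hred : (Zred Z).mulVec c = 0 := by
      funext jk
      show Z (jk.1.succ, jk.2.succ) ⬝ᵥ c = 0
      exact hzz jk.1.succ jk.2.succ
    exact rank_inj hZrank c hred
  have hNunit : IsUnit N := gram_isUnit hμ V hVinj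
  have hNN : N * N⁻¹ = 1 :=
    Matrix.mul_nonsing_inv N ((Matrix.isUnit_iff_isUnit_det N).mp hNunit)
  -- the candidate projection onto ℋ
  set PVm : Matrix (Cell J K) (Cell J K) ℝ := V * (N⁻¹ * (Vᵀ * D)) with hPV_def
  set Q : Matrix (Cell J K) (Cell J K) ℝ := PT + PVm with hQ_def
  have hPTcolsT : ∀ j, (fun i => PT i j) ∈ margSpace J K := fun j => cols_mem hPTproj j
  -- annihilation identities
  have hRV : Rmᵀ * D * V = 0 := perp_annih Rm V hRcolsT hVcolsPerp
  have hEV : Eᵀ * D * V = 0 := perp_annih E V hEcolsT hVcolsPerp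
  have hVPT : Vᵀ * D * PT = 0 := perp_annih' V PT hVcolsPerp hPTcolsT
  have hTmV : Tmᵀ * D * V = 0 := perp_annih Tm V hTmcols hVcolsPerp
  have hTmPT : Tmᵀ * D * PT = Tmᵀ * D := proj_fix_mat hPTproj Tm hTmcols
  -- Xᵀ D Q = Xᵀ D for the generators
  have hRQ : Rmᵀ * D * Q = Rmᵀ * D := by
    rw [hQ_def, Matrix.mul_add, hRPT, hPV_def, shuffle, hRV, Matrix.zero_mul, Matrix.zero_mul,
      add_zero]
  have hEQ : Eᵀ * D * Q = Eᵀ * D := by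
    rw [hQ_def, Matrix.mul_add, hEPT, hPV_def, shuffle, hEV, Matrix.zero_mul, Matrix.zero_mul,
      add_zero]
  have hZQ : Zᵀ * D * Q = Zᵀ * D := by
    have hTQ : Tmᵀ * D * Q = Tmᵀ * D := by
      rw [hQ_def, Matrix.mul_add, hTmPT, hPV_def, shuffle, hTmV, Matrix.zero_mul,
        Matrix.zero_mul, add_zero]
    have hVQ : Vᵀ * D * Q = Vᵀ * D := by
      rw [hQ_def, Matrix.mul_add, hVPT, hPV_def, shuffle, ← hN, hNN, Matrix.one_mul, zero_add]
    have hZdecomp : Zᵀ = Tmᵀ + Vᵀ := by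
      rw [hTm, Matrix.transpose_sub]
      abel
    rw [hZdecomp, Matrix.add_mul, Matrix.add_mul, hTQ, hVQ]
  -- Q is the D-orthogonal projection onto ℋ
  have hQproj : IsProjD D (modelSpace Z) Q := by
    intro x
    constructor
    · rw [hQ_def, Matrix.add_mulVec]
      apply Submodule.add_mem
      · exact Submodule.mem_sup_left (hPTproj x).1
      · rw [hPV_def, ← Matrix.mulVec_mulVec]
        refine colSpan_le ?_ (mulVec_mem_colSpan V _)
        intro k
        have e1 : (fun i => V i k) = (fun i => Z i k) - (fun i => Tm i k) := by
          funext i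
          rw [hTm]
          simp
        rw [e1]
        exact Submodule.sub_mem _ (hZcols k) (Submodule.mem_sup_left (hTmcols k))
    · intro s hs
      have hconv : ∀ {n : Type} [Fintype n] (X : Matrix (Cell J K) n ℝ),
          Xᵀ * D * Q = Xᵀ * D → ∀ j, (fun i => X i j) ∈ annih μ (x - Q.mulVec x) := by
        intro n _ X hX j
        have h0 : Xᵀ * D * (1 - Q) = 0 := by
          rw [Matrix.mul_sub, Matrix.mul_one, hX, sub_self]
        have h1 := mem_annih_of_matrix h0 x j
        rwa [one_sub_mulVec] at h1
      have hle : modelSpace Z ≤ annih μ (x - Q.mulVec x) := by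
        rw [modelSpace, margSpace_eq]
        apply sup_le
        · apply sup_le
          · rw [rowSpace, Submodule.span_le]
            rintro _ ⟨j, rfl⟩
            exact hconv Rm hRQ j
          · exact colSpan_le (hconv E hEQ)
        · exact colSpan_le (hconv Z hZQ)
      exact hle hs
  have hPHQ : PH = Q := projD_unique hμ hPH hQproj
  -- final computation
  have hBPR : Bᵀ * PR = 0 := by
    ext k i
    have e1 : (Bᵀ * PR) k i = bVec k ⬝ᵥ (fun a => PR a i) := by
      simp [hB, Bmat, Matrix.mul_apply, dotProduct, Matrix.transpose_apply]
    obtain ⟨cc, hcc⟩ := row_char (hPRcols i)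
    have e2 : bVec (J := J) k ⬝ᵥ (fun a => PR a i) = PR (0, k.succ) i - PR (0, 0) i :=
      bVec_dot k _
    have e3 : PR (0, k.succ) i = cc 0 := hcc 0 k.succ
    have e4 : PR (0, (0 : Fin (K+1))) i = cc 0 := hcc 0 0
    rw [e1, e2, e3, e4, sub_self, Matrix.zero_apply]
  have hBE : Bᵀ * E = 1 := by
    ext k k'
    have e1 : (Bᵀ * E) k k' = bVec k ⬝ᵥ (fun a => E a k') := by
      simp [hB, Bmat, Matrix.mul_apply, dotProduct, Matrix.transpose_apply]
    have e2 : bVec (J := J) k ⬝ᵥ (fun a => E a k')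
        = eCol k'.succ (0, k.succ) - eCol k'.succ ((0 : Fin (J+1)), (0 : Fin (K+1))) :=
      bVec_dot k _
    rw [e1, e2, eCol_apply, eCol_apply, Matrix.one_apply]
    by_cases h : k = k'
    · simp [h, (Fin.succ_ne_zero k').symm]
    · simp [h, (Fin.succ_ne_zero k').symm, fun h' => h (Fin.succ_inj.mp h')]
  have hBW : Bᵀ * W = 1 := by
    rw [hW, ← Matrix.mul_assoc, Matrix.mul_sub, Matrix.mul_one, hBPR, sub_zero, hBE]
  have hWB : Wᵀ * B = 1 := by
    have h := congrArg Matrix.transpose hBW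
    rw [Matrix.transpose_mul, Matrix.transpose_transpose, Matrix.transpose_one] at h
    exact h
  have hDdet : IsUnit D.det := by
    rw [hD, Matrix.det_diagonal]
    exact isUnit_iff_ne_zero.mpr (Finset.prod_ne_zero_iff.mpr fun i _ => (hμ i).ne')
  have hDDinv : D * D⁻¹ = 1 := Matrix.mul_nonsing_inv D hDdet
  refine ⟨by rw [hesm]; exact hMunit, hNunit, ?_⟩
  rw [hPHQ, hQ_def, hPT_def, hPV_def, hesm]
  have hterm : ∀ {p : Type} [Fintype p] (A : Matrix (Cell J K) p ℝ) (G : Matrix p p ℝ),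
      Bᵀ * (A * (G * (Aᵀ * D))) * D⁻¹ * B = ((Bᵀ * A) * G) * (Aᵀ * B) := by
    intro p _ A G
    have e1 : D * (D⁻¹ * B) = B := by rw [← Matrix.mul_assoc, hDDinv, Matrix.one_mul]
    simp only [Matrix.mul_assoc]
    rw [e1]
  simp only [Matrix.mul_add, Matrix.add_mul]
  rw [hBPR, Matrix.zero_mul, Matrix.zero_mul, hterm W M⁻¹, hterm V N⁻¹, hBW, Matrix.one_mul,
    hWB, Matrix.mul_one, zero_add]
  simp only [Matrix.mul_assoc]
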